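/- For every Paley graph P_q, the Lovász theta function satisfies ϑ(P_q) = √q. -/

import Mathlib

open scoped Classical

/-- The Paley graph on a finite field: vertices are field elements, two vertices
adjacent iff their difference is a nonzero square. -/
def Paley (F : Type) [Field F] : SimpleGraph F :=
  SimpleGraph.fromRel (fun x y => ∃ z : F, z ≠ 0 ∧ x - y = z ^ 2)

/-- The Lovász theta function of a graph, as the optimal value of the SDP
max { <J, X> : X ⪰ 0, tr X = 1, X_{ij} = 0 for all edges {i,j} }. -/
noncomputable def lovaszTheta {V : Type} [Fintype V] (G : SimpleGraph V) : ℝ :=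
  sSup {t | ∃ X : Matrix V V ℝ, X.PosSemidef ∧ X.trace = 1 ∧
    (∀ i j, G.Adj i j → X i j = 0) ∧ t = ∑ i, ∑ j, X i j}

open Finset Matrix

section Helpers

variable {V : Type} [Fintype V]

lemma Stmt7.psd_smul {M : Matrix V V ℝ} (hM : M.PosSemidef) {c : ℝ} (hc : 0 ≤ c) :
    (c • M).PosSemidef := by
  refine Matrix.PosSemidef.of_dotProduct_mulVec_nonneg ?_ ?_
  · rw [Matrix.IsHermitian, conjTranspose_smul, hM.1.eq, star_trivial]
  · intro x
    rw [smul_mulVec, dotProduct_smul, smul_eq_mul]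
    exact mul_nonneg hc (hM.dotProduct_mulVec_nonneg x)

lemma Stmt7.psd_of_sq {M : Matrix V V ℝ} {l : ℝ} (hsym : Mᵀ = M)
    (hsq : M * M = l • M) (hl : 0 < l) : M.PosSemidef := by
  have hH : Mᴴ = M := by rw [conjTranspose_eq_transpose_of_trivial, hsym]
  have hM : M = l⁻¹ • (Mᴴ * M) := by
    rw [hH, hsq, smul_smul, inv_mul_cancel₀ hl.ne', one_smul]
  rw [hM]
  exact Stmt7.psd_smul (Matrix.posSemidef_conjTranspose_mul_self M) (inv_nonneg.mpr hl.le)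

lemma Stmt7.psd_trace_nonneg {P : Matrix V V ℝ} (hP : P.PosSemidef) : 0 ≤ P.trace := by
  refine Finset.sum_nonneg fun i _ => ?_
  have := hP.dotProduct_mulVec_nonneg (Pi.single i 1)
  simpa [dotProduct, mulVec, Pi.single_apply, Finset.sum_ite_eq, Finset.sum_ite_eq',
    Matrix.diag] using this

open scoped MatrixOrder in
lemma Stmt7.psd_inner_nonneg {M X : Matrix V V ℝ} (hM : M.PosSemidef) (hX : X.PosSemidef) :
    0 ≤ ∑ i, ∑ j, M i j * X i j := by
  classical
  set S := CFC.sqrt X with hS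
  have hSS : S * S = X := CFC.sqrt_mul_sqrt_self X hX.nonneg
  have hSH : Sᴴ = S := (CFC.sqrt_nonneg X).posSemidef.1.eq
  have hpsd : (S * M * S).PosSemidef := by
    have := hM.conjTranspose_mul_mul_same S
    rwa [hSH] at this
  have hXsym : ∀ i j, X j i = X i j := by
    intro i j
    conv_lhs => rw [← hX.1.eq]
    simp [conjTranspose_apply]
  have htr : (S * M * S).trace = ∑ i, ∑ j, M i j * X i j := by
    rw [Matrix.mul_assoc, Matrix.trace_mul_comm, Matrix.mul_assoc, hSS]
    simp only [Matrix.trace, Matrix.diag, Matrix.mul_apply]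
    exact Finset.sum_congr rfl fun i _ => Finset.sum_congr rfl fun j _ => by rw [hXsym]
  rw [← htr]
  exact Stmt7.psd_trace_nonneg hpsd

lemma Stmt7.mul_expand {C J : Matrix V V ℝ} {n a b c : ℝ}
    (hCC : C * C = n • (1 : Matrix V V ℝ) - J) (hCJ : C * J = 0) (hJC : J * C = 0)
    (hJJ : J * J = n • J) :
    (a • (1 : Matrix V V ℝ) + b • C + c • J) * (a • (1 : Matrix V V ℝ) + b • C + c • J)
      = (a ^ 2 + n * b ^ 2) • (1 : Matrix V V ℝ) + (2 * a * b) • C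
        + (c ^ 2 * n + 2 * a * c - b ^ 2) • J := by
  simp only [Matrix.add_mul, Matrix.mul_add, Matrix.smul_mul, Matrix.mul_smul, hCC, hCJ, hJC,
    hJJ, Matrix.mul_one, Matrix.one_mul, smul_zero, smul_add, smul_smul, smul_sub]
  module

end Helpers

section CharMatrices

/-- The matrix of quadratic-character values of differences. -/
noncomputable def Cmat (F : Type) [Field F] [Fintype F] : Matrix F F ℝ :=
  Matrix.of fun x y => ((quadraticChar F (x - y) : ℤ) : ℝ)

/-- The all-ones matrix. -/
noncomputable def Jmat (F : Type) : Matrix F F ℝ := Matrix.of fun _ _ => 1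

variable {F : Type} [Field F] [Fintype F]

lemma Stmt7.quadChar_conv (hF : ringChar F ≠ 2) {b : F} (hb : b ≠ 0) :
    ∑ x : F, (quadraticChar F x : ℤ) * quadraticChar F (x + b) = -1 := by
  have h0 : ∑ x : F, (quadraticChar F x : ℤ) * quadraticChar F (x + b)
      = ∑ x ∈ univ.erase (0:F), (quadraticChar F x : ℤ) * quadraticChar F (x + b) := by
    rw [← Finset.add_sum_erase univ _ (mem_univ (0:F))]
    simp
  rw [h0]
  have h1 : ∀ x ∈ univ.erase (0:F),
      (quadraticChar F x : ℤ) * quadraticChar F (x + b)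
        = quadraticChar F (1 + b * x⁻¹) := by
    intro x hx
    have hx0 : x ≠ 0 := (Finset.mem_erase.mp hx).1
    have : x + b = x * (1 + b * x⁻¹) := by field_simp
    rw [this, _root_.map_mul, ← mul_assoc, ← _root_.map_mul]
    have : x * x = x ^ 2 := (sq x).symm
    rw [this, quadraticChar_sq_one' hx0, one_mul]
  rw [Finset.sum_congr rfl h1]
  have h2 : ∑ x ∈ univ.erase (0:F), (quadraticChar F (1 + b * x⁻¹) : ℤ)
      = ∑ u ∈ univ.erase (1:F), (quadraticChar F u : ℤ) := by
    refine Finset.sum_nbij' (fun x => 1 + b * x⁻¹) (fun u => b * (u - 1)⁻¹) ?_ ?_ ?_ ?_ ?_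
    · intro x hx
      have hx0 : x ≠ 0 := (Finset.mem_erase.mp hx).1
      refine Finset.mem_erase.mpr ⟨?_, mem_univ _⟩
      intro h
      have : b * x⁻¹ = 0 := by linear_combination h
      rcases mul_eq_zero.mp this with h' | h'
      · exact hb h'
      · exact hx0 (inv_eq_zero.mp h')
    · intro u hu
      have hu1 : u ≠ 1 := (Finset.mem_erase.mp hu).1
      refine Finset.mem_erase.mpr ⟨?_, mem_univ _⟩
      intro h
      rcases mul_eq_zero.mp h with h' | h'
      · exact hb h'
      · exact hu1 (by have := inv_eq_zero.mp h'; linear_combination this)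
    · intro x hx
      have hx0 : x ≠ 0 := (Finset.mem_erase.mp hx).1
      field_simp
      rw [add_sub_cancel_left, div_self hb]
    · intro u hu
      have hu1 : u ≠ 1 := (Finset.mem_erase.mp hu).1
      have : u - 1 ≠ 0 := sub_ne_zero.mpr hu1
      field_simp
      ring
    · intro x hx; rfl
  rw [h2]
  have h3 : ∑ u ∈ univ.erase (1:F), (quadraticChar F u : ℤ)
      = (∑ u : F, (quadraticChar F u : ℤ)) - quadraticChar F 1 := by
    rw [← Finset.add_sum_erase univ _ (mem_univ (1:F))]; ring
  rw [h3]
  rw [quadraticChar_sum_zero hF, _root_.map_one]; ring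

lemma Stmt7.qc_neg_one (hs : IsSquare (-1 : F)) :
    quadraticChar F (-1) = 1 :=
  (quadraticChar_one_iff_isSquare (neg_ne_zero.mpr one_ne_zero)).mpr hs

lemma Stmt7.qc_symm (hs : IsSquare (-1 : F)) (a : F) :
    quadraticChar F (-a) = quadraticChar F a := by
  rw [show (-a) = (-1) * a by ring, _root_.map_mul, Stmt7.qc_neg_one hs, one_mul]

lemma Stmt7.Cmat_symm (hs : IsSquare (-1 : F)) :
    (Cmat F)ᵀ = Cmat F := by
  ext x y
  simp only [transpose_apply, Cmat, Matrix.of_apply]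
  rw [show y - x = -(x - y) by ring, Stmt7.qc_symm hs]

lemma Stmt7.Cmat_row_sum (hF : ringChar F ≠ 2) (x : F) :
    ∑ y : F, Cmat F x y = 0 := by
  have : ∑ y : F, (quadraticChar F (x - y) : ℤ) = ∑ u : F, (quadraticChar F u : ℤ) :=
    Fintype.sum_equiv (Equiv.subLeft x) _ _ (fun y => rfl)
  simp only [Cmat, Matrix.of_apply]
  rw [← Int.cast_sum, this, quadraticChar_sum_zero hF]
  norm_num

lemma Stmt7.Cmat_mul_Jmat (hF : ringChar F ≠ 2) : Cmat F * Jmat F = 0 := by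
  ext x y
  simp only [mul_apply, Jmat, Matrix.of_apply, mul_one, Matrix.zero_apply]
  exact Stmt7.Cmat_row_sum hF x

lemma Stmt7.Jmat_mul_Cmat (hF : ringChar F ≠ 2) (hs : IsSquare (-1 : F)) :
    Jmat F * Cmat F = 0 := by
  have h := congrArg Matrix.transpose (Stmt7.Cmat_mul_Jmat hF)
  rw [transpose_mul, Stmt7.Cmat_symm hs] at h
  rw [show (Jmat F)ᵀ = Jmat F from rfl] at h
  simpa using h

lemma Stmt7.Jmat_mul_Jmat : Jmat F * Jmat F = ((Fintype.card F : ℝ)) • Jmat F := by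
  ext x y
  simp [mul_apply, Jmat]

lemma Stmt7.Cmat_mul_Cmat (hF : ringChar F ≠ 2) (hs : IsSquare (-1 : F)) :
    Cmat F * Cmat F = ((Fintype.card F : ℝ)) • (1 : Matrix F F ℝ) - Jmat F := by
  ext x y
  simp only [mul_apply, Cmat, Matrix.of_apply, Matrix.sub_apply, Matrix.smul_apply, one_apply, Jmat,
    smul_eq_mul]
  have hcast : (∑ z : F, ((quadraticChar F (x - z) : ℤ):ℝ) * ((quadraticChar F (z - y) : ℤ):ℝ))
      = ((∑ z : F, (quadraticChar F (x - z)) * (quadraticChar F (z - y)) : ℤ) : ℝ) := by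
    push_cast; rfl
  rw [hcast]
  by_cases hxy : x = y
  · subst hxy
    have : ∑ z : F, (quadraticChar F (x - z) : ℤ) * quadraticChar F (z - x)
        = (Fintype.card F : ℤ) - 1 := by
      have h1 : ∀ z : F, (quadraticChar F (x - z) : ℤ) * quadraticChar F (z - x)
          = 1 - (if z = x then (1:ℤ) else 0) := by
        intro z
        by_cases hz : z = x
        · simp [hz]
        · rw [show x - z = -(z - x) by ring, Stmt7.qc_symm hs]
          have hz0 : z - x ≠ 0 := sub_ne_zero.mpr hz
          rw [← pow_two, quadraticChar_sq_one hz0]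
          simp [hz]
      rw [Finset.sum_congr rfl (fun z _ => h1 z)]
      simp [Finset.sum_sub_distrib, Finset.card_univ]
    rw [this]; push_cast; simp
  · have key : ∑ z : F, (quadraticChar F (x - z) : ℤ) * quadraticChar F (z - y) = -1 := by
      have h1 : ∀ z : F, (quadraticChar F (x - z) : ℤ) * quadraticChar F (z - y)
          = (quadraticChar F (z - x) : ℤ) * quadraticChar F ((z - x) + (x - y)) := by
        intro z
        rw [show x - z = -(z - x) by ring, Stmt7.qc_symm hs,
          show z - x + (x - y) = z - y by ring]
      rw [Finset.sum_congr rfl (fun z _ => h1 z)]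
      have hconv := Stmt7.quadChar_conv hF (b := x - y) (sub_ne_zero.mpr hxy)
      calc ∑ z : F, (quadraticChar F (z - x) : ℤ) * quadraticChar F ((z - x) + (x - y))
          = ∑ u : F, (quadraticChar F u : ℤ) * quadraticChar F (u + (x - y)) :=
            Fintype.sum_equiv (Equiv.subRight x) _ _ (fun z => rfl)
        _ = -1 := hconv
    rw [key]; simp [hxy]

lemma Stmt7.Cmat_trace : (Cmat F).trace = 0 := by
  simp [Matrix.trace, Matrix.diag, Cmat]

lemma Stmt7.Jmat_trace : (Jmat F).trace = (Fintype.card F : ℝ) := by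
  simp [Matrix.trace, Matrix.diag, Jmat, Finset.card_univ]

lemma Stmt7.Jmat_posSemidef : (Jmat F).PosSemidef := by
  refine Matrix.PosSemidef.of_dotProduct_mulVec_nonneg ?_ ?_
  · ext x y; simp [Jmat, conjTranspose_apply]
  · intro x
    have : (star x) ⬝ᵥ (Jmat F *ᵥ x) = (∑ i, x i) * (∑ j, x j) := by
      simp [dotProduct, Jmat, mulVec, Finset.sum_mul, mul_comm]
    rw [this]
    exact mul_self_nonneg _

lemma Stmt7.adj_iff (hF : ringChar F ≠ 2) (hs : IsSquare (-1 : F)) (i j : F) :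
    (Paley F).Adj i j ↔ i ≠ j ∧ quadraticChar F (i - j) = 1 := by
  rw [Paley, SimpleGraph.fromRel_adj]
  constructor
  · rintro ⟨hne, h | h⟩ <;> obtain ⟨z, hz0, hz⟩ := h
    · exact ⟨hne, by rw [hz]; exact quadraticChar_sq_one' hz0⟩
    · refine ⟨hne, ?_⟩
      rw [show i - j = -(j - i) by ring, Stmt7.qc_symm hs, hz]
      exact quadraticChar_sq_one' hz0
  · rintro ⟨hne, h⟩
    have hne0 : i - j ≠ 0 := sub_ne_zero.mpr hne
    obtain ⟨w, hw⟩ := (quadraticChar_one_iff_isSquare hne0).mp h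
    have hw0 : w ≠ 0 := by
      rintro rfl
      rw [mul_zero] at hw
      exact hne0 hw
    exact ⟨hne, Or.inl ⟨w, hw0, by rw [hw, sq]⟩⟩

end CharMatrices

theorem stmt7 (q : ℕ) (F : Type) [Field F] [Fintype F]
    (hcard : Fintype.card F = q) (hq : q % 4 = 1) :
    lovaszTheta (Paley F) = Real.sqrt q := by
  -- basic numeric facts
  have hq1 : 1 ≤ q := hcard ▸ Fintype.card_pos
  have hF2 : ringChar F ≠ 2 := by
    intro h
    have := FiniteField.even_card_of_char_two h
    rw [hcard] at this
    omega
  have hs : IsSquare (-1 : F) := by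
    rw [FiniteField.isSquare_neg_one_iff, hcard]
    omega
  set r : ℝ := Real.sqrt q with hrdef
  have hnq : (0:ℝ) < (q:ℝ) := by exact_mod_cast hq1
  have hr2 : r ^ 2 = (q : ℝ) := Real.sq_sqrt hnq.le
  have hr0 : 0 < r := Real.sqrt_pos.mpr hnq
  have h1q : (1:ℝ) ≤ (q:ℝ) := by exact_mod_cast hq1
  have hr1 : 1 ≤ r := by nlinarith [hr2, hr0]
  have hd0 : (0:ℝ) < 1 + r := by linarith
  have hrne : r ≠ 0 := hr0.ne'
  have hdne : (1:ℝ) + r ≠ 0 := hd0.ne'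
  have hcardr : (Fintype.card F : ℝ) = r ^ 2 := by rw [hcard, hr2]
  -- matrix identities in terms of r
  have hCC : Cmat F * Cmat F = (r ^ 2) • (1 : Matrix F F ℝ) - Jmat F := by
    rw [Stmt7.Cmat_mul_Cmat hF2 hs, hcardr]
  have hCJ : Cmat F * Jmat F = 0 := Stmt7.Cmat_mul_Jmat hF2
  have hJC : Jmat F * Cmat F = 0 := Stmt7.Jmat_mul_Cmat hF2 hs
  have hJJ : Jmat F * Jmat F = (r ^ 2) • Jmat F := by
    rw [Stmt7.Jmat_mul_Jmat, hcardr]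
  have hCsym : (Cmat F)ᵀ = Cmat F := Stmt7.Cmat_symm hs
  have hJsym : (Jmat F)ᵀ = Jmat F := rfl
  -- sums of all entries
  have hsumC : ∑ i : F, ∑ j : F, Cmat F i j = 0 := by
    exact Finset.sum_eq_zero fun i _ => Stmt7.Cmat_row_sum hF2 i
  have hsumJ : ∑ i : F, ∑ j : F, Jmat F i j = r ^ 2 * r ^ 2 := by
    simp only [Jmat, Matrix.of_apply, Finset.sum_const, Finset.card_univ, nsmul_eq_mul, mul_one]
    rw [hcardr]
  have hsumI : ∑ i : F, ∑ j : F, (1 : Matrix F F ℝ) i j = r ^ 2 := by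
    have : ∀ i : F, ∑ j : F, (1 : Matrix F F ℝ) i j = 1 := by
      intro i
      simp [Matrix.one_apply, Finset.sum_ite_eq]
    rw [Finset.sum_congr rfl fun i _ => this i]
    simp [Finset.card_univ, hcardr]
  -- the primal feasible matrix
  set a₁ : ℝ := 1 / (r * (1 + r)) with ha₁
  set b₁ : ℝ := -(1 / (r ^ 2 * (1 + r))) with hb₁
  set c₁ : ℝ := -(1 / (r ^ 3 * (1 + r))) with hc₁
  set d₁ : ℝ := 1 / (r ^ 2 * (1 + r)) + 1 / (r ^ 3 * (1 + r)) with hd₁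
  set X₀ : Matrix F F ℝ := a₁ • (1 : Matrix F F ℝ) + b₁ • Cmat F + c₁ • Jmat F with hX₀
  set X : Matrix F F ℝ := X₀ + d₁ • Jmat F with hX
  have hX₀sq : X₀ * X₀ = (2 * a₁) • X₀ := by
    rw [hX₀, Stmt7.mul_expand hCC hCJ hJC hJJ]
    have e1 : a₁ ^ 2 + r ^ 2 * b₁ ^ 2 = 2 * a₁ * a₁ := by
      rw [ha₁, hb₁]; field_simp; ring
    have e2 : 2 * a₁ * b₁ = 2 * a₁ * b₁ := rfl
    have e3 : c₁ ^ 2 * r ^ 2 + 2 * a₁ * c₁ - b₁ ^ 2 = 2 * a₁ * c₁ := by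
      rw [ha₁, hb₁, hc₁]; field_simp; ring
    rw [e1, e3, smul_add, smul_add, smul_smul, smul_smul, smul_smul]
  have hX₀sym : X₀ᵀ = X₀ := by
    rw [hX₀]
    simp [transpose_add, transpose_smul, hCsym, hJsym]
  have ha₁pos : 0 < 2 * a₁ := by
    rw [ha₁]; positivity
  have hX₀psd : X₀.PosSemidef := Stmt7.psd_of_sq hX₀sym hX₀sq ha₁pos
  have hd₁pos : 0 ≤ d₁ := by rw [hd₁]; positivity
  have hXpsd : X.PosSemidef := hX₀psd.add (Stmt7.psd_smul Stmt7.Jmat_posSemidef hd₁pos)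
  have hXtrace : X.trace = 1 := by
    rw [hX, hX₀]
    simp only [Matrix.trace_add, Matrix.trace_smul, Stmt7.Cmat_trace, Stmt7.Jmat_trace,
      Matrix.trace_one, smul_eq_mul, mul_zero, hcardr]
    rw [ha₁, hc₁, hd₁]
    field_simp
    ring
  have hXedge : ∀ i j, (Paley F).Adj i j → X i j = 0 := by
    intro i j hadj
    obtain ⟨hne, hchi⟩ := (Stmt7.adj_iff hF2 hs i j).mp hadj
    have hCij : Cmat F i j = 1 := by
      simp only [Cmat, Matrix.of_apply, hchi]
      norm_num
    rw [hX, hX₀]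
    simp only [Matrix.add_apply, Matrix.smul_apply, Matrix.one_apply_ne hne, hCij, smul_eq_mul,
      mul_zero, mul_one, zero_add]
    have : Jmat F i j = 1 := rfl
    rw [this]
    rw [hb₁, hc₁, hd₁]
    field_simp
    ring
  have hXsum : ∑ i, ∑ j, X i j = r := by
    have hexp : ∀ i j, X i j = a₁ * (1:Matrix F F ℝ) i j + b₁ * Cmat F i j
        + (c₁ + d₁) * Jmat F i j := by
      intro i j
      rw [hX, hX₀]
      simp only [Matrix.add_apply, Matrix.smul_apply, smul_eq_mul]
      ring
    calc ∑ i, ∑ j, X i j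
        = a₁ * (∑ i : F, ∑ j : F, (1:Matrix F F ℝ) i j) + b₁ * (∑ i : F, ∑ j : F, Cmat F i j)
          + (c₁ + d₁) * (∑ i : F, ∑ j : F, Jmat F i j) := by
          simp only [hexp, Finset.sum_add_distrib, ← Finset.mul_sum]
      _ = r := by
          rw [hsumI, hsumC, hsumJ, ha₁, hc₁, hd₁]
          field_simp
          ring
  -- the dual certificate
  set a₂ : ℝ := r ^ 2 / (1 + r) with ha₂
  set b₂ : ℝ := r / (1 + r) with hb₂
  set c₂ : ℝ := -(1 / (1 + r)) with hc₂
  set M : Matrix F F ℝ := a₂ • (1 : Matrix F F ℝ) + b₂ • Cmat F + c₂ • Jmat F with hM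
  have hMsq : M * M = (2 * a₂) • M := by
    rw [hM, Stmt7.mul_expand hCC hCJ hJC hJJ]
    have e1 : a₂ ^ 2 + r ^ 2 * b₂ ^ 2 = 2 * a₂ * a₂ := by rw [ha₂, hb₂]; field_simp; ring
    have e3 : c₂ ^ 2 * r ^ 2 + 2 * a₂ * c₂ - b₂ ^ 2 = 2 * a₂ * c₂ := by
      rw [ha₂, hb₂, hc₂]; field_simp; ring
    rw [e1, e3, smul_add, smul_add, smul_smul, smul_smul, smul_smul]
  have hMsym : Mᵀ = M := by
    rw [hM]; simp [transpose_add, transpose_smul, hCsym, hJsym]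
  have ha₂pos : 0 < 2 * a₂ := by rw [ha₂]; positivity
  have hMpsd : M.PosSemidef := Stmt7.psd_of_sq hMsym hMsq ha₂pos
  -- off the edges, M agrees with r • 1 - J
  have hMoff : ∀ i j, ¬ (Paley F).Adj i j →
      M i j = r * (if i = j then (1:ℝ) else 0) - 1 := by
    intro i j hnadj
    by_cases hij : i = j
    · subst hij
      rw [hM]
      simp only [Matrix.add_apply, Matrix.smul_apply, Matrix.one_apply_eq, smul_eq_mul, mul_one]
      have hC : Cmat F i i = 0 := by simp [Cmat]
      have hJ : Jmat F i i = 1 := rfl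
      rw [hC, hJ]
      norm_num
      rw [ha₂, hc₂]
      field_simp
      ring
    · have hchi : quadraticChar F (i - j) = -1 := by
        have hne0 : i - j ≠ 0 := sub_ne_zero.mpr hij
        rcases quadraticChar_dichotomy hne0 with h | h
        · exact absurd ((Stmt7.adj_iff hF2 hs i j).mpr ⟨hij, h⟩) hnadj
        · exact h
      have hC : Cmat F i j = -1 := by
        simp only [Cmat, Matrix.of_apply, hchi]; norm_num
      rw [hM]
      simp only [Matrix.add_apply, Matrix.smul_apply, Matrix.one_apply_ne hij, smul_eq_mul]
      have hJ : Jmat F i j = 1 := rfl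
      rw [hC, hJ, if_neg hij]
      rw [hb₂, hc₂]
      field_simp
      ring
  -- the upper bound for any feasible matrix
  have hub : ∀ Y : Matrix F F ℝ, Y.PosSemidef → Y.trace = 1 →
      (∀ i j, (Paley F).Adj i j → Y i j = 0) → ∑ i, ∑ j, Y i j ≤ r := by
    intro Y hYpsd hYtr hYedge
    have hkey : ∀ i j, M i j * Y i j = (r * (if i = j then (1:ℝ) else 0) - 1) * Y i j := by
      intro i j
      by_cases hadj : (Paley F).Adj i j
      · rw [hYedge i j hadj]; ring
      · rw [hMoff i j hadj]
    have hpos : 0 ≤ ∑ i, ∑ j, M i j * Y i j := Stmt7.psd_inner_nonneg hMpsd hYpsd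
    have hdiag : ∑ i : F, ∑ j : F, (if i = j then (1:ℝ) else 0) * Y i j = Y.trace := by
      refine Finset.sum_congr rfl fun i _ => ?_
      simp [ite_mul, Finset.sum_ite_eq]
    have hcalc : ∑ i, ∑ j, M i j * Y i j = r - ∑ i, ∑ j, Y i j := by
      calc ∑ i, ∑ j, M i j * Y i j
          = ∑ i : F, ∑ j : F, (r * ((if i = j then (1:ℝ) else 0) * Y i j) - Y i j) := by
            refine Finset.sum_congr rfl fun i _ => Finset.sum_congr rfl fun j _ => ?_
            rw [hkey]; ring
        _ = r * (∑ i : F, ∑ j : F, (if i = j then (1:ℝ) else 0) * Y i j)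
              - ∑ i, ∑ j, Y i j := by
            simp only [Finset.sum_sub_distrib, ← Finset.mul_sum]
        _ = r - ∑ i, ∑ j, Y i j := by rw [hdiag, hYtr, mul_one]
    rw [hcalc] at hpos
    linarith
  -- conclude
  have hgreat : IsGreatest {t | ∃ Z : Matrix F F ℝ, Z.PosSemidef ∧ Z.trace = 1 ∧
      (∀ i j, (Paley F).Adj i j → Z i j = 0) ∧ t = ∑ i, ∑ j, Z i j} r := by
    constructor
    · exact ⟨X, hXpsd, hXtrace, hXedge, hXsum.symm⟩
    · rintro t ⟨Z, h1, h2, h3, h4⟩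
      rw [h4]
      exact hub Z h1 h2 h3
  rw [lovaszTheta]
  exact hgreat.csSup_eq
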